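/- For every integer k ≥ 2 there exists an ordered linear k-uniform hypergraph (H,<) such that for every total ordering ⊏ of V(H) there is an edge {x₁,…,x_k} with x₁ < ⋯ < x_k that is either increasing (x₁ ⊏ ⋯ ⊏ x_k) or decreasing (x₁ ⊐ ⋯ ⊐ x_k) with respect to ⊏. -/

import Mathlib

open Function Finset

namespace Unavoid

/-- Erdős–Szekeres theorem (ported from the Mathlib Archive). -/
theorem erdos_szekeres {α : Type*} [LinearOrder α] {r s n : ℕ} {f : Fin n → α}
    (hn : r * s < n) (hf : Injective f) :
    (∃ t : Finset (Fin n), r < #t ∧ StrictMonoOn f ↑t) ∨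
      ∃ t : Finset (Fin n), s < #t ∧ StrictAntiOn f ↑t := by
  let inc_sequences_ending_in : Fin n → Finset (Finset (Fin n)) := fun i =>
    univ.powerset.filter fun t => Finset.max t = i ∧ StrictMonoOn f ↑t
  let dec_sequences_ending_in : Fin n → Finset (Finset (Fin n)) := fun i =>
    univ.powerset.filter fun t => Finset.max t = i ∧ StrictAntiOn f ↑t
  have inc_i : ∀ i, {i} ∈ inc_sequences_ending_in i := fun i => by
    simp [inc_sequences_ending_in, StrictMonoOn]
  have dec_i : ∀ i, {i} ∈ dec_sequences_ending_in i := fun i => by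
    simp [dec_sequences_ending_in, StrictAntiOn]
  let ab' : Fin n → ℕ × ℕ := by
    intro i
    apply
      (max' ((inc_sequences_ending_in i).image card) (Nonempty.image ⟨{i}, inc_i i⟩ _),
        max' ((dec_sequences_ending_in i).image card) (Nonempty.image ⟨{i}, dec_i i⟩ _))
  generalize hab : ab' = ab
  rsuffices ⟨i, hi⟩ : ∃ i, r < (ab i).1 ∨ s < (ab i).2
  · refine Or.imp ?_ ?_ hi
    on_goal 1 =>
      have : (ab i).1 ∈ image card (inc_sequences_ending_in i) := by
        simp only [← hab]; exact max'_mem _ (Nonempty.image ⟨{i}, inc_i i⟩ _)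
    on_goal 2 =>
      have : (ab i).2 ∈ image card (dec_sequences_ending_in i) := by
        simp only [← hab]; exact max'_mem _ (Nonempty.image ⟨{i}, dec_i i⟩ _)
    all_goals
      intro hi
      rw [mem_image] at this
      obtain ⟨t, ht₁, ht₂⟩ := this
      refine ⟨t, by rwa [ht₂], ?_⟩
      rw [mem_filter] at ht₁
      apply ht₁.2.2
  have : Injective ab := by
    simp only [← hab]
    apply Function.Injective.of_lt_imp_ne
    intro i j k q
    injection q with q₁ q₂
    cases lt_or_gt_of_ne fun _ => ne_of_lt ‹i < j› (hf ‹f i = f j›)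
    on_goal 1 =>
      apply ne_of_lt _ q₁
      have : (ab' i).1 ∈ image card (inc_sequences_ending_in i) := by exact max'_mem _ (Nonempty.image ⟨{i}, inc_i i⟩ _)
    on_goal 2 =>
      apply ne_of_lt _ q₂
      have : (ab' i).2 ∈ image card (dec_sequences_ending_in i) := by exact max'_mem _ (Nonempty.image ⟨{i}, dec_i i⟩ _)
    all_goals
      rw [Nat.lt_iff_add_one_le]
      apply le_max'
      rw [mem_image] at this ⊢
      rcases this with ⟨t, ht₁, ht₂⟩
      rw [mem_filter] at ht₁
      have : t.max = i := by simp only [ht₁.2.1]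
      refine ⟨insert j t, ?_, ?_⟩
      · rw [mem_filter]
        refine ⟨?_, ?_, ?_⟩
        · rw [mem_powerset]; apply subset_univ
        · convert max_insert (a := j) (s := t)
          rw [ht₁.2.1, max_eq_left]
          apply WithBot.coe_le_coe.mpr (le_of_lt ‹i < j›)
        simp only [StrictMonoOn, StrictAntiOn, coe_insert, Set.mem_insert_iff, mem_coe]
        rintro x ⟨rfl | _⟩ y ⟨rfl | _⟩ _
        · apply (irrefl _ ‹j < j›).elim
        · exfalso
          apply not_le.mpr (_root_.trans ‹i < j› ‹j < y›) (le_max_of_eq ‹y ∈ t› ‹t.max = i›)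
        · first
          | apply lt_of_le_of_lt _ ‹f i < f j›
          | apply lt_of_lt_of_le ‹f j < f i› _
          rcases lt_or_eq_of_le (le_max_of_eq ‹x ∈ t› ‹t.max = i›) with (_ | rfl)
          · apply le_of_lt (ht₁.2.2 ‹x ∈ t› (mem_of_max ‹t.max = i›) ‹x < i›)
          · rfl
        · apply ht₁.2.2 ‹x ∈ t› ‹y ∈ t› ‹x < y›
      · rw [card_insert_of_notMem, ht₂]
        intro
        apply not_le.mpr ‹i < j› (le_max_of_eq ‹j ∈ t› ‹t.max = i›)
  by_contra! q
  let ran : Finset (ℕ × ℕ) := (range r).image Nat.succ ×ˢ (range s).image Nat.succ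
  have : image ab univ ⊆ ran := by
    rintro ⟨x₁, x₂⟩
    simp only [ran, mem_image, exists_prop, mem_range, mem_univ, mem_product, true_and,
      Prod.ext_iff]
    rintro ⟨i, rfl, rfl⟩
    specialize q i
    have z : 1 ≤ (ab i).1 ∧ 1 ≤ (ab i).2 := by
      simp only [← hab]
      constructor <;>
        · apply le_max'
          rw [mem_image]
          exact ⟨{i}, by solve_by_elim, card_singleton i⟩
    exact ⟨⟨(ab i).1 - 1, by omega⟩, (ab i).2 - 1, by omega⟩
  apply not_le.mpr hn
  simpa [ran, Nat.succ_injective, card_image_of_injective, ‹Injective ab›] using card_le_card this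

/-! ### Basic definitions -/

/-- All `k`-element subsets of `Fin N`. -/
def KS (N k : ℕ) : Finset (Finset (Fin N)) := Finset.powersetCard k Finset.univ

/-- A set is monotone w.r.t. `φ` if `φ` is strictly increasing or strictly decreasing on it. -/
def Mono {N : ℕ} (φ : Fin N → Fin N) (e : Finset (Fin N)) : Prop :=
  (∀ x ∈ e, ∀ y ∈ e, x < y → φ x < φ y) ∨ (∀ x ∈ e, ∀ y ∈ e, x < y → φ y < φ x)

instance {N : ℕ} (φ : Fin N → Fin N) (e : Finset (Fin N)) : Decidable (Mono φ e) := by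
  unfold Mono; exact inferInstance

/-- Monotone `k`-sets for `φ`. -/
def MF (N k : ℕ) (φ : Fin N → Fin N) : Finset (Finset (Fin N)) := (KS N k).filter (Mono φ)

lemma card_KS (N k : ℕ) : (KS N k).card = N.choose k := by
  simp [KS, Finset.card_powersetCard]

/-- Number of `j`-sets containing a fixed set `s`. -/
lemma card_supersets {N : ℕ} (s : Finset (Fin N)) {j : ℕ} (hs : s.card ≤ j) :
    ((Finset.powersetCard j (univ : Finset (Fin N))).filter (fun Q => s ⊆ Q)).card
      = (N - s.card).choose (j - s.card) := by
  have hc : (sᶜ : Finset (Fin N)).card = N - s.card := by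
    simp [Finset.card_compl]
  rw [← hc, ← Finset.card_powersetCard (j - s.card) sᶜ]
  apply Finset.card_bij' (fun Q _ => Q \ s) (fun P _ => P ∪ s)
  · intro Q hQ
    simp only [Finset.mem_filter, Finset.mem_powersetCard_univ] at hQ
    simp only [Finset.mem_powersetCard]
    refine ⟨?_, ?_⟩
    · intro x hx
      simp only [Finset.mem_sdiff] at hx
      simp [Finset.mem_compl, hx.2]
    · rw [Finset.card_sdiff_of_subset hQ.2, hQ.1]
  · intro P hP
    simp only [Finset.mem_powersetCard] at hP
    have hdisj : Disjoint P s := by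
      rw [Finset.disjoint_left]
      intro x hxP hxs
      have := hP.1 hxP
      simp [Finset.mem_compl] at this
      exact this hxs
    simp only [Finset.mem_filter, Finset.mem_powersetCard_univ]
    constructor
    · rw [Finset.card_union_of_disjoint hdisj, hP.2]
      omega
    · exact Finset.subset_union_right
  · intro Q hQ
    simp only [Finset.mem_filter] at hQ
    exact Finset.sdiff_union_of_subset hQ.2
  · intro P hP
    simp only [Finset.mem_powersetCard] at hP
    have hdisj : Disjoint P s := by
      rw [Finset.disjoint_left]
      intro x hxP hxs
      have := hP.1 hxP
      simp [Finset.mem_compl] at this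
      exact this hxs
    exact Finset.union_sdiff_cancel_right hdisj

/-- The flag double-counting identity. -/
lemma choose_flag {N q k : ℕ} (hkq : k ≤ q) (hqN : q ≤ N) :
    N.choose k * (N - k).choose (q - k) = N.choose q * q.choose k := by
  classical
  let S : Finset (Finset (Fin N) × Finset (Fin N)) :=
    ((Finset.powersetCard k (univ : Finset (Fin N))) ×ˢ
      (Finset.powersetCard q (univ : Finset (Fin N)))).filter (fun p => p.1 ⊆ p.2)
  have hSmem : ∀ p : Finset (Fin N) × Finset (Fin N),
      p ∈ S ↔ p.1.card = k ∧ p.2.card = q ∧ p.1 ⊆ p.2 := by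
    intro p
    simp only [S, Finset.mem_filter, Finset.mem_product, Finset.mem_powersetCard_univ]
    tauto
  have h1 : S.card = N.choose k * (N - k).choose (q - k) := by
    rw [Finset.card_eq_sum_card_fiberwise
      (f := Prod.fst) (t := Finset.powersetCard k (univ : Finset (Fin N)))
      (by intro p hp; rw [Finset.mem_coe, hSmem] at hp; rw [Finset.mem_coe, Finset.mem_powersetCard_univ]; exact hp.1)]
    have hfib : ∀ e ∈ Finset.powersetCard k (univ : Finset (Fin N)),
        (S.filter (fun p => p.1 = e)).card = (N - k).choose (q - k) := by
      intro e he
      rw [Finset.mem_powersetCard_univ] at he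
      have hcard : (S.filter (fun p => p.1 = e)).card
          = ((Finset.powersetCard q (univ : Finset (Fin N))).filter (fun Q => e ⊆ Q)).card := by
        refine Finset.card_bij' (fun p _ => p.2) (fun Q _ => (e, Q)) ?_ ?_ ?_ ?_
        · intro p hp
          rw [Finset.mem_filter] at hp
          obtain ⟨hpS, hpe⟩ := hp
          rw [hSmem] at hpS
          rw [Finset.mem_filter, Finset.mem_powersetCard_univ]
          exact ⟨hpS.2.1, hpe ▸ hpS.2.2⟩
        · intro Q hQ
          rw [Finset.mem_filter, Finset.mem_powersetCard_univ] at hQ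
          rw [Finset.mem_filter, hSmem]
          exact ⟨⟨he, hQ.1, hQ.2⟩, rfl⟩
        · intro p hp
          rw [Finset.mem_filter] at hp
          exact Prod.ext hp.2.symm rfl
        · intro Q hQ
          rfl
      rw [hcard, card_supersets e (by rw [he]; exact hkq), he]
    rw [Finset.sum_congr rfl hfib, Finset.sum_const, Finset.card_powersetCard,
      Finset.card_univ, Fintype.card_fin, smul_eq_mul]
  have h2 : S.card = N.choose q * q.choose k := by
    rw [Finset.card_eq_sum_card_fiberwise
      (f := Prod.snd) (t := Finset.powersetCard q (univ : Finset (Fin N)))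
      (by intro p hp; rw [Finset.mem_coe, hSmem] at hp; rw [Finset.mem_coe, Finset.mem_powersetCard_univ]; exact hp.2.1)]
    have hfib : ∀ Q ∈ Finset.powersetCard q (univ : Finset (Fin N)),
        (S.filter (fun p => p.2 = Q)).card = q.choose k := by
      intro Q hQ
      rw [Finset.mem_powersetCard_univ] at hQ
      have hcard : (S.filter (fun p => p.2 = Q)).card = (Finset.powersetCard k Q).card := by
        refine Finset.card_bij' (fun p _ => p.1) (fun e _ => (e, Q)) ?_ ?_ ?_ ?_
        · intro p hp
          rw [Finset.mem_filter] at hp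
          obtain ⟨hpS, hpQ⟩ := hp
          rw [hSmem] at hpS
          rw [Finset.mem_powersetCard]
          exact ⟨hpQ ▸ hpS.2.2, hpS.1⟩
        · intro e he
          rw [Finset.mem_powersetCard] at he
          rw [Finset.mem_filter, hSmem]
          exact ⟨⟨he.2, hQ, he.1⟩, rfl⟩
        · intro p hp
          rw [Finset.mem_filter] at hp
          exact Prod.ext rfl hp.2.symm
        · intro e he
          rfl
      rw [hcard, Finset.card_powersetCard, hQ]
    rw [Finset.sum_congr rfl hfib, Finset.sum_const, Finset.card_powersetCard,
      Finset.card_univ, Fintype.card_fin, smul_eq_mul]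
  rw [← h1, h2]

/-! ### Density of monotone sets -/

/-- Every `q`-set contains a monotone `k`-subset (Erdős–Szekeres), for `q = (k-1)²+1`. -/
lemma exists_mono_subset {N k : ℕ} (hk : 1 ≤ k) {φ : Fin N → Fin N} (hφ : Injective φ)
    {Q : Finset (Fin N)} (hQ : Q.card = (k-1)*(k-1)+1) :
    ∃ e, e ∈ MF N k φ ∧ e ⊆ Q := by
  classical
  set q := (k-1)*(k-1)+1 with hq
  let emb := Q.orderEmbOfFin hQ
  have hemb : ∀ i, emb i ∈ Q := fun i => Q.orderEmbOfFin_mem hQ i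
  have hinj : Injective (fun i => φ (emb i)) := fun i j h => emb.injective (hφ h)
  have hn : (k-1) * (k-1) < q := Nat.lt_succ_self _
  rcases erdos_szekeres (f := fun i => φ (emb i)) hn hinj with ⟨t, ht, hmono⟩ | ⟨t, ht, hmono⟩
  all_goals {
    obtain ⟨t', ht', hct'⟩ := Finset.exists_subset_card_eq (show k ≤ t.card by omega)
    refine ⟨t'.image (fun i => emb i), ?_, ?_⟩
    · rw [MF, Finset.mem_filter]
      constructor
      · rw [KS, Finset.mem_powersetCard_univ,
          Finset.card_image_of_injective _ emb.injective, hct']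
      · first
        | · left
            intro x hx y hy hxy
            rw [Finset.mem_image] at hx hy
            obtain ⟨i, hi, rfl⟩ := hx
            obtain ⟨j, hj, rfl⟩ := hy
            exact hmono (Finset.mem_coe.2 (ht' hi)) (Finset.mem_coe.2 (ht' hj))
              (emb.lt_iff_lt.1 hxy)
        | · right
            intro x hx y hy hxy
            rw [Finset.mem_image] at hx hy
            obtain ⟨i, hi, rfl⟩ := hx
            obtain ⟨j, hj, rfl⟩ := hy
            exact hmono (Finset.mem_coe.2 (ht' hi)) (Finset.mem_coe.2 (ht' hj))
              (emb.lt_iff_lt.1 hxy)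
    · intro x hx
      rw [Finset.mem_image] at hx
      obtain ⟨i, _, rfl⟩ := hx
      exact hemb i }

/-- Density: monotone `k`-sets make up at least a `1/C(q,k)` fraction of all `k`-sets. -/
lemma mono_density {N k : ℕ} (hk : 1 ≤ k) (hqN : (k-1)*(k-1)+1 ≤ N)
    {φ : Fin N → Fin N} (hφ : Injective φ) :
    N.choose k ≤ (((k-1)*(k-1)+1).choose k) * (MF N k φ).card := by
  classical
  set q := (k-1)*(k-1)+1 with hq
  have hkq : k ≤ q := by nlinarith [Nat.sub_add_cancel hk]
  -- choice function
  let g : Finset (Fin N) → Finset (Fin N) := fun Q =>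
    if h : ∃ e, e ∈ MF N k φ ∧ e ⊆ Q then h.choose else ∅
  have hg : ∀ Q ∈ Finset.powersetCard q (univ : Finset (Fin N)),
      g Q ∈ MF N k φ ∧ g Q ⊆ Q := by
    intro Q hQ
    rw [Finset.mem_powersetCard_univ] at hQ
    have h : ∃ e, e ∈ MF N k φ ∧ e ⊆ Q := exists_mono_subset hk hφ hQ
    simp only [g, dif_pos h]
    exact h.choose_spec
  have hstep : N.choose q ≤ (MF N k φ).card * ((N - k).choose (q - k)) := by
    have hfib := Finset.card_eq_sum_card_fiberwise
      (f := g) (s := Finset.powersetCard q (univ : Finset (Fin N))) (t := MF N k φ)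
      (fun Q hQ => (hg Q hQ).1)
    rw [Finset.card_powersetCard, Finset.card_univ, Fintype.card_fin] at hfib
    rw [hfib]
    calc ∑ e ∈ MF N k φ, ((Finset.powersetCard q (univ : Finset (Fin N))).filter
          (fun Q => g Q = e)).card
        ≤ ∑ e ∈ MF N k φ, ((Finset.powersetCard q (univ : Finset (Fin N))).filter
          (fun Q => e ⊆ Q)).card := by
          apply Finset.sum_le_sum
          intro e he
          apply Finset.card_le_card
          intro Q hQ
          rw [Finset.mem_filter] at hQ ⊢
          exact ⟨hQ.1, hQ.2 ▸ (hg Q hQ.1).2⟩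
      _ = ∑ e ∈ MF N k φ, (N - k).choose (q - k) := by
          apply Finset.sum_congr rfl
          intro e he
          have hek : e.card = k := by
            rw [MF, Finset.mem_filter, KS, Finset.mem_powersetCard_univ] at he
            exact he.1
          rw [card_supersets e (by rw [hek]; exact hkq), hek]
      _ = (MF N k φ).card * ((N - k).choose (q - k)) := by
          rw [Finset.sum_const, smul_eq_mul]
  have hX : 0 < (N - k).choose (q - k) := Nat.choose_pos (by omega)
  have hflag := choose_flag (N := N) (q := q) (k := k) hkq hqN
  have : N.choose k * (N - k).choose (q - k) ≤
      (q.choose k * (MF N k φ).card) * ((N - k).choose (q - k)) := by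
    calc N.choose k * (N - k).choose (q - k) = N.choose q * q.choose k := hflag
      _ ≤ ((MF N k φ).card * ((N - k).choose (q - k))) * q.choose k :=
          Nat.mul_le_mul_right _ hstep
      _ = (q.choose k * (MF N k φ).card) * ((N - k).choose (q - k)) := by ring
  exact Nat.le_of_mul_le_mul_right this hX

/-! ### Counting in the product space -/

/-- The space of `m`-tuples of `k`-sets. -/
def Omega (N k m : ℕ) : Finset (Fin m → Finset (Fin N)) :=
  Fintype.piFinset (fun _ => KS N k)

lemma card_Omega (N k m : ℕ) : (Omega N k m).card = (N.choose k) ^ m := by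
  simp [Omega, Fintype.card_piFinset, card_KS]

lemma mem_Omega {N k m : ℕ} {f : Fin m → Finset (Fin N)} :
    f ∈ Omega N k m ↔ ∀ i, f i ∈ KS N k := Fintype.mem_piFinset

/-- Counting tuples with two fixed coordinates. -/
lemma card_two_fixed {N k m : ℕ} {i j : Fin m} (hij : i ≠ j)
    {S T : Finset (Fin N)} (hS : S ∈ KS N k) (hT : T ∈ KS N k) :
    ((Omega N k m).filter (fun f => f i = S ∧ f j = T)).card = (N.choose k) ^ (m - 2) := by
  classical
  have hset : (Omega N k m).filter (fun f => f i = S ∧ f j = T)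
      = Fintype.piFinset (fun x => if x = i then {S} else if x = j then {T} else KS N k) := by
    ext f
    rw [Finset.mem_filter, mem_Omega, Fintype.mem_piFinset]
    have hji : j ≠ i := Ne.symm hij
    constructor
    · rintro ⟨hΩ, h1, h2⟩ x
      split_ifs with hx1 hx2
      · rw [Finset.mem_singleton, hx1]; exact h1
      · rw [Finset.mem_singleton, hx2]; exact h2
      · exact hΩ x
    · intro h
      have hfi : f i = S := by simpa using h i
      have hfj : f j = T := by simpa [hji] using h j
      refine ⟨fun x => ?_, hfi, hfj⟩
      have hx := h x
      split_ifs at hx with h1 h2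
      · rw [Finset.mem_singleton] at hx; rw [hx]; exact hS
      · rw [Finset.mem_singleton] at hx; rw [hx]; exact hT
      · exact hx
  rw [hset, Fintype.card_piFinset]
  have hju : j ∈ (univ : Finset (Fin m)).erase i := by
    rw [Finset.mem_erase]; exact ⟨Ne.symm hij, Finset.mem_univ j⟩
  rw [← Finset.mul_prod_erase (univ : Finset (Fin m))
    (fun x => ((if x = i then {S} else if x = j then {T} else KS N k) : Finset (Finset (Fin N))).card)
    (Finset.mem_univ i)]
  rw [← Finset.mul_prod_erase _ _ hju]
  have hrest : ∀ x ∈ (((univ : Finset (Fin m)).erase i).erase j),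
      ((if x = i then {S} else if x = j then {T} else KS N k) : Finset (Finset (Fin N))).card
        = N.choose k := by
    intro x hx
    rw [Finset.mem_erase, Finset.mem_erase] at hx
    rw [if_neg hx.2.1, if_neg hx.1, card_KS]
  rw [Finset.prod_congr rfl hrest, Finset.prod_const, if_pos rfl, if_neg (Ne.symm hij), if_pos rfl]
  rw [Finset.card_singleton, Finset.card_singleton, Finset.card_erase_of_mem hju,
    Finset.card_erase_of_mem (Finset.mem_univ i), Finset.card_univ, Fintype.card_fin,
    one_mul, one_mul]
  have hmm : m - 1 - 1 = m - 2 := by omega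
  rw [hmm]

/-- Counting tuples whose pair at two coordinates lies in a fixed relation. -/
lemma card_pair_rel {N k m : ℕ} {i j : Fin m} (hij : i ≠ j)
    {R : Finset (Finset (Fin N) × Finset (Fin N))} (hR : R ⊆ (KS N k) ×ˢ (KS N k)) :
    ((Omega N k m).filter (fun f => (f i, f j) ∈ R)).card = R.card * (N.choose k) ^ (m - 2) := by
  classical
  have hfw := Finset.card_eq_sum_card_fiberwise
    (s := (Omega N k m).filter (fun f => (f i, f j) ∈ R))
    (f := fun f => (f i, f j)) (t := R)
    (fun f hf => (Finset.mem_filter.1 hf).2)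
  rw [hfw]
  have hfib : ∀ z ∈ R,
      (((Omega N k m).filter (fun f => (f i, f j) ∈ R)).filter
        (fun f => (f i, f j) = z)).card = (N.choose k) ^ (m - 2) := by
    intro z hz
    have : ((Omega N k m).filter (fun f => (f i, f j) ∈ R)).filter (fun f => (f i, f j) = z)
        = (Omega N k m).filter (fun f => f i = z.1 ∧ f j = z.2) := by
      ext f
      rw [Finset.filter_filter, Finset.mem_filter, Finset.mem_filter]
      constructor
      · rintro ⟨h1, _, h3⟩
        exact ⟨h1, by rw [← h3], by rw [← h3]⟩
      · rintro ⟨h1, h2, h3⟩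
        have : (f i, f j) = z := by rw [h2, h3]
        exact ⟨h1, this ▸ hz, this⟩
    rw [this]
    have hzz := hR hz
    rw [Finset.mem_product] at hzz
    exact card_two_fixed hij hzz.1 hzz.2
  rw [Finset.sum_congr rfl hfib, Finset.sum_const, smul_eq_mul]

/-- The number of conflicting (ordered) pairs in a tuple. -/
def Dcount {N : ℕ} (m : ℕ) (f : Fin m → Finset (Fin N)) : ℕ :=
  (((univ : Finset (Fin m)).offDiag).filter (fun p => 2 ≤ ((f p.1) ∩ (f p.2)).card)).card

/-- Pairs of `k`-sets sharing at least two elements. -/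
def BadPairs (N k : ℕ) : Finset (Finset (Fin N) × Finset (Fin N)) :=
  ((KS N k) ×ˢ (KS N k)).filter (fun z => 2 ≤ (z.1 ∩ z.2).card)

lemma sum_Dcount (N k m : ℕ) :
    ∑ f ∈ Omega N k m, Dcount m f
      = (m * m - m) * ((BadPairs N k).card * (N.choose k) ^ (m - 2)) := by
  classical
  have hswap : ∑ f ∈ Omega N k m, Dcount m f
      = ∑ p ∈ (univ : Finset (Fin m)).offDiag,
          ((Omega N k m).filter (fun f => 2 ≤ ((f p.1) ∩ (f p.2)).card)).card := by
    simp only [Dcount, Finset.card_filter]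
    rw [Finset.sum_comm]
  rw [hswap]
  have hfix : ∀ p ∈ (univ : Finset (Fin m)).offDiag,
      ((Omega N k m).filter (fun f => 2 ≤ ((f p.1) ∩ (f p.2)).card)).card
        = (BadPairs N k).card * (N.choose k) ^ (m - 2) := by
    intro p hp
    rw [Finset.mem_offDiag] at hp
    have heq : (Omega N k m).filter (fun f => 2 ≤ ((f p.1) ∩ (f p.2)).card)
        = (Omega N k m).filter (fun f => (f p.1, f p.2) ∈ BadPairs N k) := by
      apply Finset.filter_congr
      intro f hf
      rw [mem_Omega] at hf
      simp only [BadPairs, Finset.mem_filter, Finset.mem_product]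
      constructor
      · intro h; exact ⟨⟨hf p.1, hf p.2⟩, h⟩
      · intro h; exact h.2
    have hRsub : BadPairs N k ⊆ (KS N k) ×ˢ (KS N k) := Finset.filter_subset _ _
    rw [heq]
    exact card_pair_rel hp.2.2 hRsub
  rw [Finset.sum_congr rfl hfix, Finset.sum_const, smul_eq_mul, Finset.offDiag_card,
    Finset.card_univ, Fintype.card_fin]

lemma card_BadPairs (N k : ℕ) (hk : 2 ≤ k) :
    (BadPairs N k).card ≤ (N.choose k) * ((k * k) * ((N - 2).choose (k - 2))) := by
  classical
  have hbu : BadPairs N k = (KS N k).biUnion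
      (fun S => ({S} : Finset (Finset (Fin N))) ×ˢ
        ((KS N k).filter (fun T => 2 ≤ (S ∩ T).card))) := by
    ext z
    simp only [BadPairs, Finset.mem_filter, Finset.mem_product, Finset.mem_biUnion,
      Finset.mem_singleton]
    constructor
    · rintro ⟨⟨h1, h2⟩, h3⟩
      exact ⟨z.1, h1, rfl, h2, h3⟩
    · rintro ⟨S, hS, h1, h2, h3⟩
      exact ⟨⟨h1 ▸ hS, h2⟩, h1 ▸ h3⟩
  rw [hbu]
  calc ((KS N k).biUnion _).card
      ≤ ∑ S ∈ KS N k, (({S} : Finset (Finset (Fin N))) ×ˢ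
          ((KS N k).filter (fun T => 2 ≤ (S ∩ T).card))).card := Finset.card_biUnion_le
    _ ≤ ∑ S ∈ KS N k, (k * k) * ((N - 2).choose (k - 2)) := by
        apply Finset.sum_le_sum
        intro S hS
        rw [Finset.card_product, Finset.card_singleton, one_mul]
        have hSk : S.card = k := (Finset.mem_powersetCard_univ).1 hS
        have hcov : (KS N k).filter (fun T => 2 ≤ (S ∩ T).card)
            ⊆ (S.powersetCard 2).biUnion (fun d => (KS N k).filter (fun T => d ⊆ T)) := by
          intro T hT
          rw [Finset.mem_filter] at hT
          obtain ⟨d, hd, hdc⟩ := Finset.exists_subset_card_eq hT.2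
          rw [Finset.mem_biUnion]
          refine ⟨d, ?_, ?_⟩
          · rw [Finset.mem_powersetCard]
            exact ⟨hd.trans Finset.inter_subset_left, hdc⟩
          · rw [Finset.mem_filter]
            exact ⟨hT.1, hd.trans Finset.inter_subset_right⟩
        calc ((KS N k).filter (fun T => 2 ≤ (S ∩ T).card)).card
            ≤ ((S.powersetCard 2).biUnion (fun d => (KS N k).filter (fun T => d ⊆ T))).card :=
              Finset.card_le_card hcov
          _ ≤ ∑ d ∈ S.powersetCard 2, ((KS N k).filter (fun T => d ⊆ T)).card :=
              Finset.card_biUnion_le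
          _ ≤ ∑ d ∈ S.powersetCard 2, ((N - 2).choose (k - 2)) := by
              apply Finset.sum_le_sum
              intro d hd
              rw [Finset.mem_powersetCard] at hd
              rw [KS]
              rw [card_supersets d (by rw [hd.2]; exact hk), hd.2]
          _ = (S.powersetCard 2).card * ((N - 2).choose (k - 2)) := by
              rw [Finset.sum_const, smul_eq_mul]
          _ ≤ (k * k) * ((N - 2).choose (k - 2)) := by
              apply Nat.mul_le_mul_right
              rw [Finset.card_powersetCard, hSk]
              calc k.choose 2 ≤ k ^ 2 := Nat.choose_le_pow k 2
                _ = k * k := sq k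
    _ = (N.choose k) * ((k * k) * ((N - 2).choose (k - 2))) := by
        rw [Finset.sum_const, smul_eq_mul, card_KS]

/-! ### The tail bounds -/

lemma card_hit_pattern {N k m : ℕ} {F : Finset (Finset (Fin N))} (hF : F ⊆ KS N k)
    (A : Finset (Fin m)) :
    ((Omega N k m).filter (fun f => ∀ i, (f i ∈ F ↔ i ∈ A))).card
      = F.card ^ A.card * ((N.choose k) - F.card) ^ (m - A.card) := by
  classical
  have hset : (Omega N k m).filter (fun f => ∀ i, (f i ∈ F ↔ i ∈ A))
      = Fintype.piFinset (fun i => if i ∈ A then F else (KS N k) \ F) := by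
    ext f
    rw [Finset.mem_filter, mem_Omega, Fintype.mem_piFinset]
    constructor
    · rintro ⟨hΩ, h⟩ i
      split_ifs with hi
      · exact (h i).2 hi
      · rw [Finset.mem_sdiff]; exact ⟨hΩ i, fun hc => hi ((h i).1 hc)⟩
    · intro h
      constructor
      · intro i
        have hx := h i
        split_ifs at hx with hi
        · exact hF hx
        · exact (Finset.mem_sdiff.1 hx).1
      · intro i
        have hx := h i
        split_ifs at hx with hi
        · exact ⟨fun _ => hi, fun _ => hx⟩
        · exact ⟨fun hc => absurd hc (Finset.mem_sdiff.1 hx).2, fun hc => absurd hc hi⟩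
  rw [hset, Fintype.card_piFinset]
  have hcards : ∀ i : Fin m, ((if i ∈ A then F else (KS N k) \ F)).card
      = if i ∈ A then F.card else (N.choose k) - F.card := by
    intro i
    split_ifs
    · rfl
    · rw [Finset.card_sdiff_of_subset hF, card_KS]
  rw [Finset.prod_congr rfl (fun i _ => hcards i), Finset.prod_ite, Finset.prod_const,
    Finset.prod_const]
  have h1 : ((univ : Finset (Fin m)).filter (fun i => i ∈ A)) = A := by ext i; simp
  have h2 : ((univ : Finset (Fin m)).filter (fun i => ¬ i ∈ A)).card = m - A.card := by
    have he : ((univ : Finset (Fin m)).filter (fun i => ¬ i ∈ A)) = univ \ A := by ext i; simp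
    rw [he, Finset.card_sdiff_of_subset (Finset.subset_univ A), Finset.card_univ, Fintype.card_fin]
  rw [h1, h2]

lemma pow_bound {c h j t m : ℕ} (hj : j ≤ t) (ht : t ≤ m) (hh : h ≤ c) :
    h ^ j * (c - h) ^ (m - j) ≤ c ^ t * (c - h) ^ (m - t) := by
  have e : m - j = (t - j) + (m - t) := by omega
  rw [e, pow_add, ← mul_assoc]
  have h1 : h ^ j * (c - h) ^ (t - j) ≤ c ^ j * c ^ (t - j) :=
    Nat.mul_le_mul (Nat.pow_le_pow_left hh _) (Nat.pow_le_pow_left (Nat.sub_le c h) _)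
  calc h ^ j * (c - h) ^ (t - j) * (c - h) ^ (m - t)
      ≤ c ^ j * c ^ (t - j) * (c - h) ^ (m - t) := Nat.mul_le_mul_right _ h1
    _ = c ^ t * (c - h) ^ (m - t) := by rw [← pow_add]; congr 2; omega

lemma card_small_subsets (m t : ℕ) (hm : 1 ≤ m) :
    ((univ : Finset (Fin m)).powerset.filter (fun A => A.card ≤ t)).card ≤ (t+1) * m ^ t := by
  classical
  have hsub : (univ : Finset (Fin m)).powerset.filter (fun A => A.card ≤ t)
      ⊆ (Finset.range (t+1)).biUnion (fun j => Finset.powersetCard j univ) := by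
    intro A hA
    rw [Finset.mem_filter] at hA
    rw [Finset.mem_biUnion]
    exact ⟨A.card, Finset.mem_range.2 (Nat.lt_succ_of_le hA.2),
      Finset.mem_powersetCard_univ.2 rfl⟩
  calc ((univ : Finset (Fin m)).powerset.filter (fun A => A.card ≤ t)).card
      ≤ ((Finset.range (t+1)).biUnion (fun j => Finset.powersetCard j univ)).card :=
        Finset.card_le_card hsub
    _ ≤ ∑ j ∈ Finset.range (t+1), (Finset.powersetCard j (univ : Finset (Fin m))).card :=
        Finset.card_biUnion_le
    _ ≤ ∑ _j ∈ Finset.range (t+1), m ^ t := by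
        apply Finset.sum_le_sum
        intro j hj
        rw [Finset.card_powersetCard, Finset.card_univ, Fintype.card_fin]
        calc m.choose j ≤ m ^ j := Nat.choose_le_pow m j
          _ ≤ m ^ t := Nat.pow_le_pow_right hm (Nat.lt_succ_iff.1 (Finset.mem_range.1 hj))
    _ = (t+1) * m ^ t := by rw [Finset.sum_const, Finset.card_range, smul_eq_mul]

/-- Tail bound for tuples with few hits in `F`. -/
lemma card_bad2 {N k m t : ℕ} (hm : 1 ≤ m) (htm : t ≤ m) {F : Finset (Finset (Fin N))}
    (hF : F ⊆ KS N k) :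
    ((Omega N k m).filter (fun f => ((univ : Finset (Fin m)).filter
        (fun i => f i ∈ F)).card ≤ t)).card
      ≤ ((t+1) * m ^ t) * ((N.choose k) ^ t * ((N.choose k) - F.card) ^ (m - t)) := by
  classical
  set bad2 := (Omega N k m).filter (fun f => ((univ : Finset (Fin m)).filter
      (fun i => f i ∈ F)).card ≤ t) with hbad2
  have hmap : ∀ f ∈ bad2, (univ : Finset (Fin m)).filter (fun i => f i ∈ F)
      ∈ (univ : Finset (Fin m)).powerset.filter (fun A => A.card ≤ t) := by
    intro f hf
    rw [hbad2, Finset.mem_filter] at hf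
    rw [Finset.mem_filter, Finset.mem_powerset]
    exact ⟨Finset.filter_subset _ _, hf.2⟩
  have hfw := Finset.card_eq_sum_card_fiberwise
    (s := bad2) (f := fun f => (univ : Finset (Fin m)).filter (fun i => f i ∈ F))
    (t := (univ : Finset (Fin m)).powerset.filter (fun A => A.card ≤ t)) (fun f hf => hmap f hf)
  rw [hfw]
  have hFc : F.card ≤ N.choose k := by rw [← card_KS N k]; exact Finset.card_le_card hF
  have hfib : ∀ A ∈ (univ : Finset (Fin m)).powerset.filter (fun A => A.card ≤ t),
      (bad2.filter (fun f => (univ : Finset (Fin m)).filter (fun i => f i ∈ F) = A)).card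
        ≤ (N.choose k) ^ t * ((N.choose k) - F.card) ^ (m - t) := by
    intro A hA
    rw [Finset.mem_filter] at hA
    have hsub : bad2.filter (fun f => (univ : Finset (Fin m)).filter (fun i => f i ∈ F) = A)
        ⊆ (Omega N k m).filter (fun f => ∀ i, (f i ∈ F ↔ i ∈ A)) := by
      intro f hf
      rw [Finset.mem_filter, hbad2, Finset.mem_filter] at hf
      rw [Finset.mem_filter]
      refine ⟨hf.1.1, fun i => ?_⟩
      rw [← hf.2]
      simp
    calc (bad2.filter (fun f => (univ : Finset (Fin m)).filter (fun i => f i ∈ F) = A)).card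
        ≤ ((Omega N k m).filter (fun f => ∀ i, (f i ∈ F ↔ i ∈ A))).card :=
          Finset.card_le_card hsub
      _ = F.card ^ A.card * ((N.choose k) - F.card) ^ (m - A.card) := card_hit_pattern hF A
      _ ≤ (N.choose k) ^ t * ((N.choose k) - F.card) ^ (m - t) :=
          pow_bound hA.2 htm hFc
  calc ∑ A ∈ (univ : Finset (Fin m)).powerset.filter (fun A => A.card ≤ t),
        (bad2.filter (fun f => (univ : Finset (Fin m)).filter (fun i => f i ∈ F) = A)).card
      ≤ ∑ _A ∈ (univ : Finset (Fin m)).powerset.filter (fun A => A.card ≤ t),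
        ((N.choose k) ^ t * ((N.choose k) - F.card) ^ (m - t)) := Finset.sum_le_sum hfib
    _ = ((univ : Finset (Fin m)).powerset.filter (fun A => A.card ≤ t)).card *
        ((N.choose k) ^ t * ((N.choose k) - F.card) ^ (m - t)) := by
        rw [Finset.sum_const, smul_eq_mul]
    _ ≤ ((t+1) * m ^ t) * ((N.choose k) ^ t * ((N.choose k) - F.card) ^ (m - t)) :=
        Nat.mul_le_mul_right _ (card_small_subsets m t hm)

/-- Markov bound for tuples with many conflicting pairs. -/
lemma card_bad1 (N k m t : ℕ) :
    (t + 1) * ((Omega N k m).filter (fun f => t + 1 ≤ Dcount m f)).card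
      ≤ (m * m - m) * ((BadPairs N k).card * (N.choose k) ^ (m - 2)) := by
  have h1 := Finset.card_nsmul_le_sum
    ((Omega N k m).filter (fun f => t + 1 ≤ Dcount m f)) (Dcount m) (t+1)
    (fun f hf => (Finset.mem_filter.1 hf).2)
  have h2 : ∑ f ∈ (Omega N k m).filter (fun f => t + 1 ≤ Dcount m f), Dcount m f
      ≤ ∑ f ∈ Omega N k m, Dcount m f :=
    Finset.sum_le_sum_of_subset (Finset.filter_subset _ _)
  rw [← sum_Dcount N k m]
  rw [smul_eq_mul, mul_comm] at h1
  exact h1.trans h2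

/-! ### Elementary numeric inequalities -/

lemma add_one_pow_ge (b n : ℕ) : b ^ (n+1) + (n+1) * b ^ n ≤ (b+1) ^ (n+1) := by
  induction n with
  | zero => simp [pow_succ]
  | succ n ih =>
      have hstep : (b+1) ^ (n+2) = (b+1) ^ (n+1) * (b+1) := by ring
      have h2 : (b ^ (n+1) + (n+1) * b ^ n) * (b+1) ≤ (b+1) ^ (n+1) * (b+1) :=
        Nat.mul_le_mul_right _ ih
      have h3 : b ^ (n+2) + (n+2) * b ^ (n+1) ≤ (b ^ (n+1) + (n+1) * b ^ n) * (b+1) := by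
        have hexp : (b ^ (n+1) + (n+1) * b ^ n) * (b+1)
            = b ^ (n+2) + (n+2) * b ^ (n+1) + (n+1) * b ^ n := by ring
        rw [hexp]
        omega
      calc b ^ (n+2) + (n+2) * b ^ (n+1)
          ≤ (b ^ (n+1) + (n+1) * b ^ n) * (b+1) := h3
        _ ≤ (b+1) ^ (n+1) * (b+1) := h2
        _ = (b+1) ^ (n+2) := by ring

lemma two_mul_pred_pow_le {a : ℕ} (ha : 1 ≤ a) : 2 * (a - 1) ^ a ≤ a ^ a := by
  rcases Nat.lt_or_ge a 2 with h | h
  · interval_cases a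
    · simp
  · obtain ⟨n, rfl⟩ : ∃ n, a = n + 1 := ⟨a - 1, by omega⟩
    have hb : (n + 1) - 1 = n := by omega
    rw [hb]
    have := add_one_pow_ge n n
    have hnn : n ^ (n+1) ≤ (n+1) * n ^ n := by
      calc n ^ (n+1) = n * n ^ n := by ring
        _ ≤ (n+1) * n ^ n := Nat.mul_le_mul_right _ (by omega)
    omega

lemma pow_key {a : ℕ} (ha : 1 ≤ a) (u : ℕ) :
    2 ^ u * (a - 1) ^ (a * u) ≤ a ^ (a * u) := by
  have h1 : (a - 1) ^ (a * u) = ((a - 1) ^ a) ^ u := by rw [← pow_mul]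
  have h2 : a ^ (a * u) = (a ^ a) ^ u := by rw [← pow_mul]
  rw [h1, h2, ← mul_pow]
  exact Nat.pow_le_pow_left (two_mul_pred_pow_le ha) u

lemma lin_le_two_pow {p : ℕ} (hp : 1 ≤ p) : p * (3 * p + 1) + 1 ≤ 2 ^ (3 * p) := by
  have h1 : p + 1 ≤ 2 ^ p := Nat.lt_two_pow_self
  have h2 : (p + 1) ^ 3 ≤ (2 ^ p) ^ 3 := Nat.pow_le_pow_left h1 3
  have h3 : (2 ^ p) ^ 3 = 2 ^ (3 * p) := by rw [← pow_mul]; ring_nf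
  have h4 : p * (3 * p + 1) + 1 ≤ (p + 1) ^ 3 := by
    have hexp : (p + 1) ^ 3 = p ^ 3 + 3 * p ^ 2 + 3 * p + 1 := by ring
    nlinarith [hexp]
  omega

/-- Rank function of a strict total order. -/
lemma rank_lemma {N : ℕ} (r : Fin N → Fin N → Prop) (h : IsStrictTotalOrder (Fin N) r) :
    ∃ φ : Fin N → Fin N, Injective φ ∧ ∀ x y, r x y ↔ φ x < φ y := by
  classical
  have htrans : ∀ x y z, r x y → r y z → r x z := fun x y z =>
    h.toIsStrictOrder.toIsTrans.trans x y z
  have hirr : ∀ x, ¬ r x x := fun x => by haveI := h; exact irrefl_of r x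
  have htri : ∀ x y, r x y ∨ x = y ∨ r y x := fun x y =>
    by haveI := h; exact trichotomous_of r x y
  have hlt : ∀ v : Fin N, ((univ : Finset (Fin N)).filter (fun w => r w v)).card < N := by
    intro v
    have hsub : (univ : Finset (Fin N)).filter (fun w => r w v) ⊆ univ.erase v := by
      intro w hw
      rw [Finset.mem_filter] at hw
      rw [Finset.mem_erase]
      refine ⟨fun hc => ?_, Finset.mem_univ w⟩
      exact hirr v (hc ▸ hw.2)
    calc ((univ : Finset (Fin N)).filter (fun w => r w v)).card
        ≤ (univ.erase v).card := Finset.card_le_card hsub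
      _ = N - 1 := by rw [Finset.card_erase_of_mem (Finset.mem_univ v), Finset.card_univ,
            Fintype.card_fin]
      _ < N := by
          have : 0 < N := Fin.pos v
          omega
  let φ : Fin N → Fin N := fun v => ⟨_, hlt v⟩
  have hmono : ∀ x y, r x y → φ x < φ y := by
    intro x y hxy
    have hsub : (univ : Finset (Fin N)).filter (fun w => r w x)
        ⊆ (univ : Finset (Fin N)).filter (fun w => r w y) := by
      intro w hw
      rw [Finset.mem_filter] at hw ⊢
      exact ⟨hw.1, htrans w x y hw.2 hxy⟩
    have hss : (univ : Finset (Fin N)).filter (fun w => r w x)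
        ⊂ (univ : Finset (Fin N)).filter (fun w => r w y) := by
      rw [Finset.ssubset_iff_of_subset hsub]
      refine ⟨x, ?_, ?_⟩
      · rw [Finset.mem_filter]; exact ⟨Finset.mem_univ x, hxy⟩
      · rw [Finset.mem_filter]
        rintro ⟨-, hc⟩
        exact hirr x hc
    exact Finset.card_lt_card hss
  have hiff : ∀ x y, r x y ↔ φ x < φ y := by
    intro x y
    constructor
    · exact hmono x y
    · intro hφ
      rcases htri x y with hr | he | hr
      · exact hr
      · subst he; exact absurd hφ (lt_irrefl _)
      · exact absurd (lt_trans hφ (hmono y x hr)) (lt_irrefl _)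
  refine ⟨φ, ?_, hiff⟩
  intro x y hxy
  by_contra hne
  rcases htri x y with hr | he | hr
  · exact absurd (hxy ▸ hmono x y hr) (lt_irrefl _)
  · exact hne he
  · exact absurd (hxy ▸ hmono y x hr) (lt_irrefl _)

/-- The numeric parameters. -/
lemma numeric_main {a k : ℕ} (ha : 1 ≤ a) (hk : 2 ≤ k) :
    ∃ N u t m : ℕ,
      2 ≤ m ∧ t + a * u = m ∧ (k-1)*(k-1)+1 ≤ N ∧ 1 ≤ u ∧ t ≤ m ∧ 2 ≤ N ∧
      2 * (m * m) * (k * k * k * (k-1)) < (t+1) * (N * (N-1)) ∧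
      2 * N^N * ((t+1) * m^t) ≤ 2^u := by
  obtain ⟨A, hA⟩ : ∃ A, A = a^2 * k^4 := ⟨_, rfl⟩
  have hA1 : 1 ≤ A := by
    have h1 : 1 ≤ a ^ 2 := Nat.one_le_pow _ _ (by omega)
    have h2 : 1 ≤ k ^ 4 := Nat.one_le_pow _ _ (by omega)
    calc 1 = 1 * 1 := by ring
      _ ≤ a^2 * k^4 := Nat.mul_le_mul h1 h2
      _ = A := hA.symm
  obtain ⟨p, hp⟩ : ∃ p, p = 66 * A * (8 + 2*a + 4*k) + 198 * A + 3 := ⟨_, rfl⟩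
  have hp1 : 1 ≤ p := by omega
  obtain ⟨L, hL⟩ : ∃ L, L = 3 * p := ⟨_, rfl⟩
  obtain ⟨M, hM⟩ : ∃ M, M = 2 ^ L := ⟨_, rfl⟩
  have hM2 : 2 ≤ M := by
    rw [hM]
    calc 2 = 2 ^ 1 := (pow_one 2).symm
      _ ≤ 2 ^ L := Nat.pow_le_pow_right (by norm_num) (by omega)
  have hMlin : p * (L + 1) + 1 ≤ M := by
    rw [hM, hL]
    exact lin_le_two_pow hp1
  obtain ⟨W, hW⟩ : ∃ W, W = 2 * L + 66 * A * (8 + 2*a + 4*k + 3*L) := ⟨_, rfl⟩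
  have hWp : W + 1 ≤ p * (L + 1) := by
    have hexp : W + 1 = (2 + 198 * A) * L + (66 * A * (8 + 2*a + 4*k) + 1) := by
      rw [hW]; ring
    have h1 : (2 + 198 * A) * L ≤ p * L := Nat.mul_le_mul_right L (by omega)
    have h2 : 66 * A * (8 + 2*a + 4*k) + 1 ≤ p := by omega
    calc W + 1 = (2 + 198 * A) * L + (66 * A * (8 + 2*a + 4*k) + 1) := hexp
      _ ≤ p * L + p := Nat.add_le_add h1 h2
      _ = p * (L + 1) := by ring
  have hWM : W + 2 ≤ M := by omega
  have hbig : 8 + 2*a + 4*k + 3*L ≤ 66 * A * (8 + 2*a + 4*k + 3*L) :=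
    Nat.le_mul_of_pos_left _ (by omega)
  have hkW : k ≤ W := by omega
  have hkM : k ≤ M := by omega
  have hak4 : a * k^4 ≤ A := by
    rw [hA]
    have h1 : a ≤ a ^ 2 := by
      calc a = a * 1 := by ring
        _ ≤ a * a := Nat.mul_le_mul_left a ha
        _ = a ^ 2 := (sq a).symm
    exact Nat.mul_le_mul_right _ h1
  have hak4W : 66 * (a * k^4) ≤ W := by
    have h1 : 66 * (a * k^4) ≤ 66 * A := Nat.mul_le_mul_left 66 hak4
    have h2 : 66 * A ≤ 66 * A * (8 + 2*a + 4*k + 3*L) :=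
      Nat.le_mul_of_pos_right _ (by omega)
    omega
  have hak4M : 66 * (a * k^4) ≤ M := by omega
  obtain ⟨Y, hY⟩ : ∃ Y, Y = M * M := ⟨_, rfl⟩
  obtain ⟨U, hU⟩ : ∃ U, U = Y * M := ⟨_, rfl⟩
  have hMY : M ≤ Y := by
    rw [hY]; exact Nat.le_mul_of_pos_left M (by omega)
  have hY4 : 4 ≤ Y := by
    rw [hY]
    calc 4 = 2 * 2 := by ring
      _ ≤ M * M := Nat.mul_le_mul hM2 hM2
  have hU8 : 8 ≤ U := by
    rw [hU]
    calc 8 = 4 * 2 := by ring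
      _ ≤ Y * M := Nat.mul_le_mul hY4 hM2
  have htau : 66 * A * Y ≤ a * U := by
    calc 66 * A * Y = (66 * (a * k^4)) * (a * Y) := by rw [hA]; ring
      _ ≤ M * (a * Y) := Nat.mul_le_mul_right _ hak4M
      _ = a * U := by rw [hU]; ring
  have hauU : U ≤ a * U := Nat.le_mul_of_pos_left _ (by omega)
  obtain ⟨t, ht⟩ : ∃ t, t = 66 * A * Y := ⟨_, rfl⟩
  obtain ⟨m, hm⟩ : ∃ m, m = t + a * U := ⟨_, rfl⟩
  refine ⟨Y, U, t, m, ?_, hm.symm, ?_, ?_, ?_, ?_, ?_, ?_⟩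
  · omega
  · obtain ⟨b, rfl⟩ : ∃ b, k = b + 1 := ⟨k - 1, by omega⟩
    have hb : b + 1 - 1 = b := by omega
    rw [hb]
    have h1 : b * b + 1 ≤ (b+1) * (b+1) := by nlinarith
    have h2 : (b+1) * (b+1) ≤ M * M := Nat.mul_le_mul hkM hkM
    rw [hY]
    linarith
  · omega
  · omega
  · omega
  · -- C1
    have hmle : m ≤ 2 * (a * U) := by omega
    have hkk : k * k * k * (k - 1) ≤ k^4 := by
      have h1 : k - 1 ≤ k := Nat.sub_le k 1
      calc k * k * k * (k-1) ≤ k * k * k * k := Nat.mul_le_mul_left _ h1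
        _ = k ^ 4 := by ring
    have step1 : 2 * (m * m) * (k * k * k * (k-1))
        ≤ 2 * ((2 * (a * U)) * (2 * (a * U))) * k^4 :=
      Nat.mul_le_mul (Nat.mul_le_mul_left 2 (Nat.mul_le_mul hmle hmle)) hkk
    have step2 : 2 * ((2 * (a * U)) * (2 * (a * U))) * k^4 = A * (8 * (U * U)) := by
      rw [hA]; ring
    have hUU : U * U = Y * (Y * Y) := by rw [hU, hY]; ring
    have hYQ : 8 * (Y * (Y * Y)) < 66 * (Y * (Y * (Y - 1))) := by
      have h1 : Y * (Y * (Y - 1)) = Y * (Y * Y) - Y * Y := by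
        rw [Nat.mul_sub_one, Nat.mul_sub]
      have hP4 : 4 * (Y * Y) ≤ Y * (Y * Y) := Nat.mul_le_mul_right _ hY4
      have hQ1 : 0 < Y * Y := by
        calc 0 < 4 * 4 := by norm_num
          _ ≤ Y * Y := Nat.mul_le_mul hY4 hY4
      omega
    have step3 : A * (8 * (Y * (Y * Y))) < A * (66 * (Y * (Y * (Y - 1)))) :=
      mul_lt_mul_of_pos_left hYQ (by omega)
    have step4 : A * (66 * (Y * (Y * (Y - 1)))) = t * (Y * (Y - 1)) := by
      rw [ht]; ring
    have step5 : t * (Y * (Y - 1)) ≤ (t + 1) * (Y * (Y - 1)) :=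
      Nat.mul_le_mul_right _ (by omega)
    calc 2 * (m * m) * (k * k * k * (k-1))
        ≤ 2 * ((2 * (a * U)) * (2 * (a * U))) * k^4 := step1
      _ = A * (8 * (U * U)) := step2
      _ = A * (8 * (Y * (Y * Y))) := by rw [hUU]
      _ < A * (66 * (Y * (Y * (Y - 1)))) := step3
      _ = t * (Y * (Y - 1)) := step4
      _ ≤ (t + 1) * (Y * (Y - 1)) := step5
  · -- C2
    obtain ⟨e1, he1⟩ : ∃ e1 : ℕ, e1 = 7 + 2*a + 4*k + 2*L := ⟨_, rfl⟩
    obtain ⟨e2, he2⟩ : ∃ e2 : ℕ, e2 = 8 + 2*a + 4*k + 3*L := ⟨_, rfl⟩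
    have hapow : a ^ 2 ≤ 2 ^ (2 * a) := by
      have h1 : a ≤ 2 ^ a := (Nat.lt_two_pow_self (n := a)).le
      calc a ^ 2 = a * a := sq a
        _ ≤ 2 ^ a * 2 ^ a := Nat.mul_le_mul h1 h1
        _ = 2 ^ (2 * a) := by rw [← pow_add]; congr 1; ring
    have hkpow : k ^ 4 ≤ 2 ^ (4 * k) := by
      have h1 : k ≤ 2 ^ k := (Nat.lt_two_pow_self (n := k)).le
      calc k ^ 4 ≤ (2 ^ k) ^ 4 := Nat.pow_le_pow_left h1 4
        _ = 2 ^ (4 * k) := by rw [← pow_mul]; congr 1; ring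
    have hYpow : Y = 2 ^ (2 * L) := by
      rw [hY, hM, ← pow_add]; congr 1; ring
    have hUpow : U = 2 ^ (3 * L) := by
      rw [hU, hY, hM, ← pow_add, ← pow_add]; congr 1; ring
    have ht1 : t + 1 ≤ 2 ^ e1 := by
      have h0 : 0 < A * Y := by
        have : 1 * 1 ≤ A * Y := Nat.mul_le_mul hA1 (by omega)
        omega
      have h67 : t + 1 ≤ 67 * A * Y := by
        have he : 66 * A * Y + A * Y = 67 * A * Y := by ring
        have h66 : t = 66 * A * Y := ht
        have hAY : 66 * A * Y + 1 ≤ 66 * A * Y + A * Y := by omega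
        omega
      have hprod : 67 * A * Y ≤ 2^7 * (2^(2*a) * (2^(4*k) * 2^(2*L))) := by
        have he : 67 * A * Y = 67 * (a^2 * (k^4 * Y)) := by rw [hA]; ring
        rw [he]
        have hYle : Y ≤ 2 ^ (2*L) := le_of_eq hYpow
        refine Nat.mul_le_mul (by norm_num) ?_
        refine Nat.mul_le_mul hapow ?_
        exact Nat.mul_le_mul hkpow hYle
      have hcollect : 2^7 * ((2:ℕ)^(2*a) * (2^(4*k) * 2^(2*L))) = 2 ^ e1 := by
        rw [← pow_add, ← pow_add, ← pow_add, he1]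
        congr 1
        ring
      omega
    have hm1 : m ≤ 2 ^ e2 := by
      have hta : t ≤ 2 ^ (7 + 2*a + 4*k + 3*L) := by
        have h2 : (2:ℕ) ^ e1 ≤ 2 ^ (7 + 2*a + 4*k + 3*L) :=
          Nat.pow_le_pow_right (by norm_num) (by rw [he1]; omega)
        omega
      have hau : a * U ≤ 2 ^ (7 + 2*a + 4*k + 3*L) := by
        have h1 : a * U ≤ 2^a * 2^(3*L) := by
          rw [hUpow]
          exact Nat.mul_le_mul (Nat.lt_two_pow_self (n := a)).le le_rfl
        have h2 : (2:ℕ)^a * 2^(3*L) = 2 ^ (a + 3*L) := by rw [← pow_add]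
        have h3 : (2:ℕ) ^ (a + 3*L) ≤ 2 ^ (7 + 2*a + 4*k + 3*L) :=
          Nat.pow_le_pow_right (by norm_num) (by omega)
        omega
      have hsplit : (2:ℕ) ^ e2 = 2 ^ (7 + 2*a + 4*k + 3*L) + 2 ^ (7 + 2*a + 4*k + 3*L) := by
        have he : e2 = (7 + 2*a + 4*k + 3*L) + 1 := by omega
        rw [he, pow_succ]
        ring
      omega
    have hmt : m ^ t ≤ 2 ^ (e2 * t) := by
      calc m ^ t ≤ (2 ^ e2) ^ t := Nat.pow_le_pow_left hm1 t
        _ = 2 ^ (e2 * t) := by rw [← pow_mul]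
    have hNpow : Y ^ Y = 2 ^ ((2 * L) * Y) := by
      calc Y ^ Y = (2 ^ (2*L)) ^ Y := by rw [← hYpow]
        _ = 2 ^ ((2 * L) * Y) := by rw [← pow_mul]
    have hfinalexp : 1 + (2*L) * Y + e1 + e2 * t ≤ U := by
      have hsmall : 1 + e1 ≤ W := by
        rw [he1, hW]
        omega
      have hWeq : 2 * L + 66 * A * e2 = W := by rw [hW, he2]
      have hWY : W ≤ Y := by omega
      have hmul : W * Y + 2 * Y ≤ M * Y := by
        have h1 : (W + 2) * Y ≤ M * Y := Nat.mul_le_mul_right Y hWM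
        have h2 : (W + 2) * Y = W * Y + 2 * Y := by ring
        omega
      have hcomb : (2 * L) * Y + (66 * A * e2) * Y = W * Y := by
        rw [← hWeq]; ring
      have hWform : e2 * t = (66 * A * e2) * Y := by rw [ht]; ring
      have hgoal : (1 + e1) + ((2 * L) * Y + (66 * A * e2) * Y) ≤ M * Y := by
        rw [hcomb]
        have h2 : W ≤ Y := hWY
        linarith
      have hUMY : M * Y = U := by rw [hU]; ring
      omega
    calc 2 * Y ^ Y * ((t+1) * m^t)
        ≤ 2 * 2^((2*L) * Y) * (2^e1 * 2^(e2 * t)) := by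
          rw [hNpow]
          exact Nat.mul_le_mul_left _ (Nat.mul_le_mul ht1 hmt)
      _ = 2 ^ (1 + (2*L) * Y + e1 + e2 * t) := by
          rw [pow_add, pow_add, pow_add, pow_one]
          ring
      _ ≤ 2 ^ U := Nat.pow_le_pow_right (by norm_num) hfinalexp

/-- Number of indices hitting the monotone family. -/
def Hits {N : ℕ} (k : ℕ) (φ : Fin N → Fin N) {m : ℕ} (g : Fin m → Finset (Fin N)) : ℕ :=
  ((Finset.univ : Finset (Fin m)).filter (fun i => g i ∈ MF N k φ)).card

/-- Tuples with few hits. -/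
def Bad2 (N k m t : ℕ) (φ : Fin N → Fin N) : Finset (Fin m → Finset (Fin N)) :=
  (Omega N k m).filter (fun g => Hits k φ g ≤ t)

lemma card_bad2' {N k m t : ℕ} (hm : 1 ≤ m) (htm : t ≤ m) (φ : Fin N → Fin N) :
    (Bad2 N k m t φ).card
      ≤ ((t+1) * m ^ t) * ((N.choose k) ^ t * ((N.choose k) - (MF N k φ).card) ^ (m - t)) :=
  card_bad2 hm htm (F := MF N k φ) (Finset.filter_subset _ _)

/-- An index is surviving if its set conflicts with no other. -/
def Surv {N m : ℕ} (g : Fin m → Finset (Fin N)) (i : Fin m) : Prop :=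
  ∀ j, j ≠ i → ((g i) ∩ (g j)).card ≤ 1

instance {N m : ℕ} (g : Fin m → Finset (Fin N)) (i : Fin m) : Decidable (Surv g i) := by
  unfold Surv; exact inferInstance

end Unavoid

set_option maxHeartbeats 2000000 in
theorem exists_ordered_linear_unavoidable (k : ℕ) (hk : 2 ≤ k) :
    ∃ (N : ℕ) (E : Finset (Finset (Fin N))),
      (∀ e ∈ E, e.card = k) ∧
      (∀ e ∈ E, ∀ f ∈ E, e ≠ f → (e ∩ f).card ≤ 1) ∧
      ∀ r : Fin N → Fin N → Prop, IsStrictTotalOrder (Fin N) r →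
        ∃ e ∈ E, ∃ x : Fin k → Fin N, StrictMono x ∧ e = Finset.image x Finset.univ ∧
          ((∀ i j : Fin k, i < j → r (x i) (x j)) ∨
            (∀ i j : Fin k, i < j → r (x j) (x i))) := by
  classical
  obtain ⟨a, haeq⟩ : ∃ a, a = ((k-1)*(k-1)+1).choose k := ⟨_, rfl⟩
  have hkq : k ≤ (k-1)*(k-1)+1 := by
    obtain ⟨b, rfl⟩ : ∃ b, k = b + 2 := ⟨k - 2, by omega⟩
    have he : (b+2-1)*(b+2-1) = (b+1)*(b+1) := by congr 1
    rw [he]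
    nlinarith
  have ha1 : 1 ≤ a := by rw [haeq]; exact Nat.choose_pos hkq
  obtain ⟨N, u, t, m, hm2, hmu, hqN, hu1, htm, hN2, hC1, hC2⟩ :=
    Unavoid.numeric_main ha1 hk
  have hkN : k ≤ N := le_trans hkq hqN
  obtain ⟨c, hc⟩ : ∃ c, c = N.choose k := ⟨_, rfl⟩
  have hc1 : 1 ≤ c := by rw [hc]; exact Nat.choose_pos hkN
  have hdens : ∀ φ : Fin N → Fin N, Injective φ →
      c ≤ a * (Unavoid.MF N k φ).card := by
    intro φ hφ
    rw [hc, haeq]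
    exact Unavoid.mono_density (by omega) hqN hφ
  have hΩcard : (Unavoid.Omega N k m).card = c ^ m := by
    rw [Unavoid.card_Omega, hc]
  obtain ⟨C₂, hC₂⟩ : ∃ C₂, C₂ = (N - 2).choose (k - 2) := ⟨_, rfl⟩
  have hC₂pos : 0 < C₂ := by rw [hC₂]; exact Nat.choose_pos (by omega)
  have hid : c * (k * (k-1)) = (N * (N-1)) * C₂ := by
    have e1 := Nat.add_one_mul_choose_eq (N-1) (k-1)
    have e2 := Nat.add_one_mul_choose_eq (N-2) (k-2)
    rw [show N - 1 + 1 = N by omega, show k - 1 + 1 = k by omega] at e1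
    rw [show N - 2 + 1 = N - 1 by omega, show k - 2 + 1 = k - 1 by omega] at e2
    calc c * (k * (k-1)) = (N.choose k * k) * (k-1) := by rw [hc]; ring
      _ = (N * (N-1).choose (k-1)) * (k-1) := by rw [e1]
      _ = N * ((N-1).choose (k-1) * (k-1)) := by ring
      _ = N * ((N-1) * (N-2).choose (k-2)) := by rw [e2]
      _ = (N * (N-1)) * C₂ := by rw [hC₂]; ring
  -- bad event 1
  have hbad1 : 2 * ((Unavoid.Omega N k m).filter
      (fun g => t + 1 ≤ Unavoid.Dcount m g)).card < c ^ m := by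
    have hb1 := Unavoid.card_bad1 N k m t
    rw [← hc] at hb1
    have hBP := Unavoid.card_BadPairs N k hk
    rw [← hc, ← hC₂] at hBP
    have hstepi : 2 * (m*m) * ((k*k) * C₂) < (t+1) * c := by
      have h1 : (2 * (m * m) * (k * k * k * (k-1))) * C₂
          < ((t+1) * (N * (N-1))) * C₂ := (Nat.mul_lt_mul_right hC₂pos).mpr hC1
      have h2 : ((t+1) * (N * (N-1))) * C₂ = ((t+1) * c) * (k * (k-1)) := by
        calc ((t+1) * (N * (N-1))) * C₂ = (t+1) * ((N * (N-1)) * C₂) := by ring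
          _ = (t+1) * (c * (k * (k-1))) := by rw [← hid]
          _ = ((t+1) * c) * (k * (k-1)) := by ring
      have h3 : (2 * (m * m) * (k * k * k * (k-1))) * C₂
          = (2 * (m*m) * ((k*k) * C₂)) * (k * (k-1)) := by ring
      rw [h3, h2] at h1
      exact lt_of_mul_lt_mul_right h1 (Nat.zero_le _)
    have hcm : c ^ m = (c * c) * c ^ (m - 2) := by
      have he : m = 2 + (m - 2) := by omega
      calc c ^ m = c ^ (2 + (m-2)) := by rw [← he]
        _ = c ^ 2 * c ^ (m-2) := by rw [pow_add]
        _ = (c * c) * c ^ (m-2) := by rw [sq]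
    have hcpow : 0 < c ^ (m - 2) := Nat.pow_pos (by omega)
    have hstrict : 2 * ((m * m - m) * ((Unavoid.BadPairs N k).card * c ^ (m - 2)))
        < (t+1) * c ^ m := by
      have hB1 : 2 * ((m * m - m) * ((Unavoid.BadPairs N k).card * c ^ (m - 2)))
          ≤ (2 * (m*m) * (Unavoid.BadPairs N k).card) * c ^ (m-2) := by
        calc 2 * ((m * m - m) * ((Unavoid.BadPairs N k).card * c ^ (m - 2)))
            = (2 * (m*m - m) * (Unavoid.BadPairs N k).card) * c ^ (m-2) := by ring
          _ ≤ (2 * (m*m) * (Unavoid.BadPairs N k).card) * c ^ (m-2) := by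
              apply Nat.mul_le_mul_right
              apply Nat.mul_le_mul_right
              omega
      have hB2 : 2 * (m*m) * (Unavoid.BadPairs N k).card
          ≤ 2 * (m*m) * (c * ((k*k) * C₂)) := Nat.mul_le_mul_left _ hBP
      have hB3 : 2 * (m*m) * (c * ((k*k) * C₂)) = (2 * (m*m) * ((k*k) * C₂)) * c := by
        ring
      have hB4 : (2 * (m*m) * ((k*k) * C₂)) * c < ((t+1) * c) * c :=
        (Nat.mul_lt_mul_right (by omega)).mpr hstepi
      calc 2 * ((m * m - m) * ((Unavoid.BadPairs N k).card * c ^ (m - 2)))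
          ≤ (2 * (m*m) * (Unavoid.BadPairs N k).card) * c ^ (m-2) := hB1
        _ ≤ ((2 * (m*m) * ((k*k) * C₂)) * c) * c ^ (m-2) := by
            rw [← hB3]
            exact Nat.mul_le_mul_right _ hB2
        _ < (((t+1) * c) * c) * c ^ (m-2) := (Nat.mul_lt_mul_right hcpow).mpr hB4
        _ = (t+1) * c ^ m := by rw [hcm]; ring
    have hfin : (t+1) * (2 * ((Unavoid.Omega N k m).filter
        (fun g => t + 1 ≤ Unavoid.Dcount m g)).card) < (t+1) * c ^ m := by
      calc (t+1) * (2 * ((Unavoid.Omega N k m).filter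
            (fun g => t + 1 ≤ Unavoid.Dcount m g)).card)
          = 2 * ((t+1) * ((Unavoid.Omega N k m).filter
            (fun g => t + 1 ≤ Unavoid.Dcount m g)).card) := by ring
        _ ≤ 2 * ((m * m - m) * ((Unavoid.BadPairs N k).card * c ^ (m - 2))) :=
            Nat.mul_le_mul_left 2 hb1
        _ < (t+1) * c ^ m := hstrict
    exact lt_of_mul_lt_mul_left hfin (Nat.zero_le _)
  -- bad event 2, per injective φ
  have hbad2 : ∀ φ : Fin N → Fin N, Injective φ →
      2 * N ^ N * (Unavoid.Bad2 N k m t φ).card ≤ c ^ m := by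
    intro φ hφ
    obtain ⟨h, hh⟩ : ∃ h, h = (Unavoid.MF N k φ).card := ⟨_, rfl⟩
    have hhc : h ≤ c := by
      rw [hh, hc, ← Unavoid.card_KS N k]
      exact Finset.card_le_card (Finset.filter_subset _ _)
    have hch : c ≤ a * h := by rw [hh]; exact hdens φ hφ
    have hs : m - t = a * u := by omega
    have hach : a * (c - h) ≤ c * (a - 1) := by
      have h1 : a * (c - h) = a * c - a * h := Nat.mul_sub a c h
      have h2 : c * (a - 1) = a * c - c := by rw [Nat.mul_sub_one, Nat.mul_comm]
      omega
    have hpk := Unavoid.pow_key ha1 u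
    have hapos : 0 < a ^ (a * u) := Nat.pow_pos (by omega)
    have hmain : (2 * N ^ N * (((t+1) * m ^ t) * (c ^ t * (c - h) ^ (a*u)))) * a ^ (a*u)
        ≤ c ^ m * a ^ (a*u) := by
      have e1 : (2 * N ^ N * (((t+1) * m ^ t) * (c ^ t * (c - h) ^ (a*u)))) * a ^ (a*u)
          = (2 * N ^ N * ((t+1) * m ^ t)) * c ^ t * ((a * (c - h)) ^ (a*u)) := by
        rw [mul_pow]
        ring
      have e2 : (a * (c - h)) ^ (a*u) ≤ (c * (a - 1)) ^ (a*u) :=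
        Nat.pow_le_pow_left hach _
      have e3 : (2 * N ^ N * ((t+1) * m ^ t)) * c ^ t * ((c * (a-1)) ^ (a*u))
          = ((2 * N ^ N * ((t+1) * m ^ t)) * (a-1) ^ (a*u)) * (c ^ t * c ^ (a*u)) := by
        rw [mul_pow]
        ring
      have e4 : c ^ t * c ^ (a*u) = c ^ m := by
        rw [← pow_add, hmu]
      have e5 : (2 * N ^ N * ((t+1) * m ^ t)) * (a-1) ^ (a*u)
          ≤ 2 ^ u * (a-1) ^ (a*u) := Nat.mul_le_mul_right _ hC2
      calc (2 * N ^ N * (((t+1) * m ^ t) * (c ^ t * (c - h) ^ (a*u)))) * a ^ (a*u)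
          = (2 * N ^ N * ((t+1) * m ^ t)) * c ^ t * ((a * (c - h)) ^ (a*u)) := e1
        _ ≤ (2 * N ^ N * ((t+1) * m ^ t)) * c ^ t * ((c * (a-1)) ^ (a*u)) :=
            Nat.mul_le_mul_left _ e2
        _ = ((2 * N ^ N * ((t+1) * m ^ t)) * (a-1) ^ (a*u)) * (c ^ t * c ^ (a*u)) := e3
        _ = ((2 * N ^ N * ((t+1) * m ^ t)) * (a-1) ^ (a*u)) * c ^ m := by rw [e4]
        _ ≤ (2 ^ u * (a-1) ^ (a*u)) * c ^ m := Nat.mul_le_mul_right _ e5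
        _ ≤ a ^ (a*u) * c ^ m := Nat.mul_le_mul_right _ hpk
        _ = c ^ m * a ^ (a*u) := by ring
    have hmain' : 2 * N ^ N * (((t+1) * m ^ t) * (c ^ t * (c - h) ^ (a*u))) ≤ c ^ m :=
      Nat.le_of_mul_le_mul_right hmain hapos
    have hQ := Unavoid.card_bad2' (N := N) (k := k) (m := m) (t := t)
      (by omega : 1 ≤ m) htm φ
    rw [← hc, ← hh, hs] at hQ
    calc 2 * N ^ N * (Unavoid.Bad2 N k m t φ).card
        ≤ 2 * N ^ N * (((t+1) * m ^ t) * (c ^ t * (c - h) ^ (a*u))) :=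
          Nat.mul_le_mul_left _ hQ
      _ ≤ c ^ m := hmain'
  -- the union bound
  obtain ⟨Φ, hΦ⟩ : ∃ Φ : Finset (Fin N → Fin N),
      Φ = (Finset.univ : Finset (Fin N → Fin N)).filter Injective := ⟨_, rfl⟩
  have hΦcard : Φ.card ≤ N ^ N := by
    rw [hΦ]
    calc ((Finset.univ : Finset (Fin N → Fin N)).filter Injective).card
        ≤ (Finset.univ : Finset (Fin N → Fin N)).card :=
          Finset.card_le_card (Finset.filter_subset _ _)
      _ = N ^ N := by rw [Finset.card_univ, Fintype.card_fun, Fintype.card_fin]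
  have hNNpos : 0 < N ^ N := Nat.pow_pos (by omega)
  have hsum2 : 2 * (∑ φ ∈ Φ, (Unavoid.Bad2 N k m t φ).card) ≤ c ^ m := by
    have h1 : ∀ φ ∈ Φ, 2 * N ^ N * (Unavoid.Bad2 N k m t φ).card ≤ c ^ m := by
      intro φ hφ
      rw [hΦ, Finset.mem_filter] at hφ
      exact hbad2 φ hφ.2
    have h2 : N ^ N * (2 * (∑ φ ∈ Φ, (Unavoid.Bad2 N k m t φ).card)) ≤ N ^ N * c ^ m := by
      calc N ^ N * (2 * (∑ φ ∈ Φ, (Unavoid.Bad2 N k m t φ).card))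
          = (2 * N ^ N) * (∑ φ ∈ Φ, (Unavoid.Bad2 N k m t φ).card) := by ring
        _ = ∑ φ ∈ Φ, 2 * N ^ N * (Unavoid.Bad2 N k m t φ).card := by
            rw [Finset.mul_sum]
        _ ≤ ∑ _φ ∈ Φ, c ^ m := Finset.sum_le_sum h1
        _ = Φ.card * c ^ m := by rw [Finset.sum_const, smul_eq_mul]
        _ ≤ N ^ N * c ^ m := Nat.mul_le_mul_right _ hΦcard
    exact Nat.le_of_mul_le_mul_left h2 hNNpos
  obtain ⟨badAll, hbadAll⟩ : ∃ badAll : Finset (Fin m → Finset (Fin N)),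
      badAll = ((Unavoid.Omega N k m).filter (fun g => t + 1 ≤ Unavoid.Dcount m g))
        ∪ Φ.biUnion (fun φ => Unavoid.Bad2 N k m t φ) := ⟨_, rfl⟩
  obtain ⟨b1, hb1v⟩ : ∃ b1, b1 = ((Unavoid.Omega N k m).filter
      (fun g => t + 1 ≤ Unavoid.Dcount m g)).card := ⟨_, rfl⟩
  obtain ⟨S2, hS2v⟩ : ∃ S2, S2 = ∑ φ ∈ Φ, (Unavoid.Bad2 N k m t φ).card := ⟨_, rfl⟩
  have hbadcard : badAll.card < c ^ m := by
    have h1 : badAll.card ≤ b1 + S2 := by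
      rw [hbadAll, hb1v, hS2v]
      refine le_trans (Finset.card_union_le _ _) ?_
      exact Nat.add_le_add_left Finset.card_biUnion_le _
    rw [← hb1v] at hbad1
    rw [← hS2v] at hsum2
    omega
  have hgood : ∃ g, g ∈ Unavoid.Omega N k m ∧ g ∉ badAll := by
    have h1 : (Unavoid.Omega N k m).card
        ≤ ((Unavoid.Omega N k m) \ badAll).card + badAll.card :=
      Finset.card_le_card_sdiff_add_card
    have h2 : 0 < ((Unavoid.Omega N k m) \ badAll).card := by omega
    obtain ⟨g, hg⟩ := Finset.card_pos.mp h2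
    rw [Finset.mem_sdiff] at hg
    exact ⟨g, hg.1, hg.2⟩
  obtain ⟨g, hgΩ, hgbad⟩ := hgood
  rw [hbadAll, Finset.mem_union] at hgbad
  push_neg at hgbad
  obtain ⟨hgb1, hgb2⟩ := hgbad
  have hDle : Unavoid.Dcount m g ≤ t := by
    by_contra hcon
    exact hgb1 (Finset.mem_filter.2 ⟨hgΩ, by omega⟩)
  have hhits : ∀ φ : Fin N → Fin N, Injective φ → t + 1 ≤ Unavoid.Hits k φ g := by
    intro φ hφ
    rw [Finset.mem_biUnion] at hgb2
    push_neg at hgb2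
    have hb := hgb2 φ (by rw [hΦ, Finset.mem_filter]; exact ⟨Finset.mem_univ φ, hφ⟩)
    by_contra hcon
    refine hb ?_
    rw [Unavoid.Bad2, Finset.mem_filter]
    exact ⟨hgΩ, by omega⟩
  clear hgb1 hgb2 hbad1 hsum2 hbadcard hbadAll
  -- the hypergraph
  refine ⟨N, ((Finset.univ : Finset (Fin m)).filter (Unavoid.Surv g)).image g, ?_, ?_, ?_⟩
  · intro e he
    rw [Finset.mem_image] at he
    obtain ⟨i, hi, rfl⟩ := he
    have := Unavoid.mem_Omega.1 hgΩ i
    exact Finset.mem_powersetCard_univ.1 this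
  · intro e he f hf hef
    rw [Finset.mem_image] at he hf
    obtain ⟨i, hi, rfl⟩ := he
    obtain ⟨j, hj, rfl⟩ := hf
    rw [Finset.mem_filter] at hi
    have hij : j ≠ i := fun hc => hef (by rw [hc])
    exact hi.2 j hij
  · intro r hr
    obtain ⟨φ, hφinj, hφiff⟩ := Unavoid.rank_lemma r hr
    obtain ⟨nons, hnons⟩ : ∃ nons : Finset (Fin m),
        nons = (Finset.univ : Finset (Fin m)).filter (fun i => ¬ Unavoid.Surv g i) :=
      ⟨_, rfl⟩
    have hnonscard : nons.card ≤ Unavoid.Dcount m g := by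
      have hwit : ∀ i ∈ nons, ∃ j, j ≠ i ∧ 2 ≤ ((g i) ∩ (g j)).card := by
        intro i hi
        rw [hnons, Finset.mem_filter] at hi
        have hns := hi.2
        rw [Unavoid.Surv] at hns
        push_neg at hns
        obtain ⟨j, hj1, hj2⟩ := hns
        exact ⟨j, hj1, by omega⟩
      rw [Unavoid.Dcount]
      apply Finset.card_le_card_of_injOn
        (fun i => (i, if h : ∃ j, j ≠ i ∧ 2 ≤ ((g i) ∩ (g j)).card then h.choose else i))
      · intro i hi
        have h := hwit i hi
        simp only [Finset.mem_coe]
        rw [dif_pos h]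
        obtain ⟨hj1, hj2⟩ := h.choose_spec
        rw [Finset.mem_filter, Finset.mem_offDiag]
        exact ⟨⟨Finset.mem_univ _, Finset.mem_univ _, Ne.symm hj1⟩, hj2⟩
      · intro i _ j _ hij
        exact congrArg Prod.fst hij
    obtain ⟨i, hi⟩ : ∃ i, i ∈ ((Finset.univ : Finset (Fin m)).filter
        (fun i => g i ∈ Unavoid.MF N k φ)) \ nons := by
      have h1 := hhits φ hφinj
      rw [Unavoid.Hits] at h1
      have h2 : ((Finset.univ : Finset (Fin m)).filter
          (fun i => g i ∈ Unavoid.MF N k φ)).card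
          ≤ (((Finset.univ : Finset (Fin m)).filter
            (fun i => g i ∈ Unavoid.MF N k φ)) \ nons).card + nons.card :=
        Finset.card_le_card_sdiff_add_card
      have h3 : 0 < (((Finset.univ : Finset (Fin m)).filter
          (fun i => g i ∈ Unavoid.MF N k φ)) \ nons).card := by omega
      obtain ⟨i, hi⟩ := Finset.card_pos.mp h3
      exact ⟨i, hi⟩
    rw [Finset.mem_sdiff, Finset.mem_filter] at hi
    obtain ⟨⟨-, hiMF⟩, hins⟩ := hi
    have hisurv : Unavoid.Surv g i := by
      by_contra hcon
      exact hins (by rw [hnons, Finset.mem_filter]; exact ⟨Finset.mem_univ i, hcon⟩)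
    have hiE : g i ∈ ((Finset.univ : Finset (Fin m)).filter (Unavoid.Surv g)).image g := by
      rw [Finset.mem_image]
      exact ⟨i, Finset.mem_filter.2 ⟨Finset.mem_univ i, hisurv⟩, rfl⟩
    rw [Unavoid.MF, Finset.mem_filter] at hiMF
    obtain ⟨hiKS, hiMono⟩ := hiMF
    have hek : (g i).card = k := Finset.mem_powersetCard_univ.1 hiKS
    set x := (g i).orderEmbOfFin hek with hx
    have hxmem : ∀ j, x j ∈ g i := fun j => (g i).orderEmbOfFin_mem hek j
    have hximg : g i = Finset.image (fun j => x j) Finset.univ := by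
      have hsub : Finset.image (fun j => x j) Finset.univ ⊆ g i := by
        intro y hy
        rw [Finset.mem_image] at hy
        obtain ⟨j, -, rfl⟩ := hy
        exact hxmem j
      have hcard : (g i).card ≤ (Finset.image (fun j => x j) Finset.univ).card := by
        rw [Finset.card_image_of_injective _ (fun s s' hss => x.injective hss),
          Finset.card_univ, Fintype.card_fin, hek]
      exact (Finset.eq_of_subset_of_card_le hsub hcard).symm
    refine ⟨g i, hiE, fun j => x j, fun s s' hss => x.strictMono hss, hximg, ?_⟩
    rcases hiMono with hmono | hmono
    · left
      intro s s' hss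
      rw [hφiff]
      exact hmono (x s) (hxmem s) (x s') (hxmem s') (x.strictMono hss)
    · right
      intro s s' hss
      rw [hφiff]
      exact hmono (x s) (hxmem s) (x s') (hxmem s') (x.strictMono hss)
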